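/- (Auslander–Yorke dichotomy for ρ_FK) A transitive TDS is almost FK-continuous if and only if it is not FK-sensitive; a minimal TDS is FK-continuous if and only if it is not FK-sensitive. -/

import Mathlib

open Filter Topology MeasureTheory Set

namespace FKPaper

variable {X : Type*} [MetricSpace X]

/-- The maximal fit of an `(n,δ)`-match between the orbits of `x` and `z` under `T`:
the largest cardinality of the domain of an order-preserving bijection
`π : D → R`, with `D, R ⊆ {0,…,n-1}` and `dist (T^[i] x) (T^[π i] z) < δ` for `i ∈ D`. -/
noncomputable def maxFit (T : X → X) (δ : ℝ) (n : ℕ) (x z : X) : ℕ :=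
  sSup {k : ℕ | ∃ i j : Fin k → ℕ, StrictMono i ∧ StrictMono j ∧
    (∀ s, i s < n) ∧ (∀ s, j s < n) ∧ ∀ s, dist (T^[i s] x) (T^[j s] z) < δ}

/-- `f̄_{n,δ}(x,z) = 1 - (maximal fit of an (n,δ)-match of x and z)/n`. -/
noncomputable def fbarN (T : X → X) (δ : ℝ) (n : ℕ) (x z : X) : ℝ :=
  1 - (maxFit T δ n x z : ℝ) / n

/-- `f̄_δ(x,z) = limsup_{n→∞} f̄_{n,δ}(x,z)`. -/
noncomputable def fbar (T : X → X) (δ : ℝ) (x z : X) : ℝ :=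
  Filter.limsup (fun n => fbarN T δ n x z) Filter.atTop

/-- The Feldman–Katok pseudometric `ρ_FK(x,z) = inf {δ > 0 : f̄_δ(x,z) < δ}`. -/
noncomputable def rhoFK (T : X → X) (x z : X) : ℝ :=
  sInf {δ : ℝ | 0 < δ ∧ fbar T δ x z < δ}

/-- `x` is an FK-continuity point for `(X,T)`. -/
def FKContinuityPoint (T : X → X) (x : X) : Prop :=
  ∀ ε > 0, ∃ δ > 0, ∀ y : X, dist x y ≤ δ → rhoFK T x y ≤ ε

/-- The set of FK-continuity points. -/
def EqFK (T : X → X) : Set X := {x : X | FKContinuityPoint T x}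

/-- Topological transitivity. -/
def IsTransitive (T : X → X) : Prop :=
  ∀ U V : Set X, IsOpen U → IsOpen V → U.Nonempty → V.Nonempty →
    ∃ n : ℕ, 0 < n ∧ ((T^[n]) ⁻¹' U ∩ V).Nonempty

/-- Minimality: every forward orbit is dense. -/
def IsMinimal (T : X → X) : Prop :=
  ∀ x : X, Dense {y : X | ∃ n : ℕ, T^[n] x = y}

/-- FK-sensitivity: some `ε > 0` works for every nonempty open set. -/
def FKSensitive (T : X → X) : Prop :=
  ∃ ε > 0, ∀ U : Set X, IsOpen U → U.Nonempty →
    ∃ x ∈ U, ∃ y ∈ U, ε < rhoFK T x y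

end FKPaper

open FKPaper Filter Topology MeasureTheory Set

namespace FKAux

variable {X : Type*} [MetricSpace X] {T : X → X} {δ δ' : ℝ} {n m p k : ℕ} {x y z : X}

def matchSet (T : X → X) (δ : ℝ) (n : ℕ) (x z : X) : Set ℕ :=
  {k : ℕ | ∃ i j : Fin k → ℕ, StrictMono i ∧ StrictMono j ∧
    (∀ s, i s < n) ∧ (∀ s, j s < n) ∧ ∀ s, dist (T^[i s] x) (T^[j s] z) < δ}

lemma maxFit_def : maxFit T δ n x z = sSup (matchSet T δ n x z) := rfl

lemma zero_mem_matchSet : 0 ∈ matchSet T δ n x z :=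
  ⟨Fin.elim0, Fin.elim0, fun a => a.elim0, fun a => a.elim0, fun a => a.elim0,
    fun a => a.elim0, fun a => a.elim0⟩

lemma le_of_mem_matchSet (h : k ∈ matchSet T δ n x z) : k ≤ n := by
  obtain ⟨i, j, hi, -, hin, -, -⟩ := h
  have hinj : Function.Injective fun s : Fin k => (⟨i s, hin s⟩ : Fin n) := by
    intro a b hab
    exact hi.injective (congrArg Fin.val hab)
  simpa using Fintype.card_le_of_injective _ hinj

lemma bddAbove_matchSet : BddAbove (matchSet T δ n x z) :=
  ⟨n, fun _ hk => le_of_mem_matchSet hk⟩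

lemma maxFit_mem : maxFit T δ n x z ∈ matchSet T δ n x z :=
  Nat.sSup_mem ⟨0, zero_mem_matchSet⟩ bddAbove_matchSet

lemma maxFit_le : maxFit T δ n x z ≤ n := le_of_mem_matchSet maxFit_mem

lemma le_maxFit (h : k ∈ matchSet T δ n x z) : k ≤ maxFit T δ n x z :=
  le_csSup bddAbove_matchSet h

lemma card_mem_matchSet {k : ℕ} (i j : Fin k → ℕ) (hi : StrictMono i) (hj : StrictMono j)
    (A : Finset (Fin k)) (hin : ∀ s ∈ A, i s < n) (hjn : ∀ s ∈ A, j s < n)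
    (hd : ∀ s ∈ A, dist (T^[i s] x) (T^[j s] z) < δ) :
    A.card ∈ matchSet T δ n x z := by
  let e := A.orderIsoOfFin rfl
  refine ⟨fun s => i (e s), fun s => j (e s), ?_, ?_, fun s => hin _ (e s).2,
    fun s => hjn _ (e s).2, fun s => hd _ (e s).2⟩
  · intro a b hab
    exact hi (e.strictMono hab)
  · intro a b hab
    exact hj (e.strictMono hab)

lemma matchSet_mono_n (hnm : n ≤ m) : matchSet T δ n x z ⊆ matchSet T δ m x z := by
  rintro k ⟨i, j, hi, hj, hin, hjn, hd⟩
  exact ⟨i, j, hi, hj, fun s => lt_of_lt_of_le (hin s) hnm,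
    fun s => lt_of_lt_of_le (hjn s) hnm, hd⟩

lemma matchSet_mono_delta (hδ : δ ≤ δ') : matchSet T δ n x z ⊆ matchSet T δ' n x z := by
  rintro k ⟨i, j, hi, hj, hin, hjn, hd⟩
  exact ⟨i, j, hi, hj, hin, hjn, fun s => lt_of_lt_of_le (hd s) hδ⟩

lemma maxFit_mono_n (hnm : n ≤ m) : maxFit T δ n x z ≤ maxFit T δ m x z :=
  csSup_le_csSup bddAbove_matchSet ⟨0, zero_mem_matchSet⟩ (matchSet_mono_n hnm)

lemma maxFit_mono_delta (hδ : δ ≤ δ') : maxFit T δ n x z ≤ maxFit T δ' n x z :=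
  csSup_le_csSup bddAbove_matchSet ⟨0, zero_mem_matchSet⟩ (matchSet_mono_delta hδ)

lemma matchSet_symm : matchSet T δ n x z = matchSet T δ n z x := by
  ext k
  constructor <;> rintro ⟨i, j, hi, hj, hin, hjn, hd⟩ <;>
    exact ⟨j, i, hj, hi, hjn, hin, fun s => by rw [dist_comm]; exact hd s⟩

lemma maxFit_symm : maxFit T δ n x z = maxFit T δ n z x := by
  rw [maxFit_def, maxFit_def, matchSet_symm]

lemma shift_mem (h : k ∈ matchSet T δ m (T^[n] x) (T^[n] z)) :
    k ∈ matchSet T δ (m + n) x z := by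
  obtain ⟨i, j, hi, hj, hin, hjn, hd⟩ := h
  refine ⟨fun s => i s + n, fun s => j s + n, fun a b hab => by simpa using hi hab,
    fun a b hab => by simpa using hj hab,
    fun s => Nat.add_lt_add_right (hin s) n, fun s => Nat.add_lt_add_right (hjn s) n, fun s => ?_⟩
  rw [Function.iterate_add_apply, Function.iterate_add_apply]
  exact hd s

lemma maxFit_le_restrict (hpm : p ≤ m) :
    maxFit T δ m x z ≤ maxFit T δ p x z + 2 * (m - p) := by
  classical
  obtain ⟨i, j, hi, hj, hin, hjn, hd⟩ := maxFit_mem (T := T) (δ := δ) (n := m) (x := x) (z := z)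
  have hmem : (Finset.univ.filter
      (fun s : Fin (maxFit T δ m x z) => i s < p ∧ j s < p)).card ∈ matchSet T δ p x z := by
    refine card_mem_matchSet i j hi hj _ ?_ ?_ ?_
    · intro s hs; exact ((Finset.mem_filter.1 hs).2).1
    · intro s hs; exact ((Finset.mem_filter.1 hs).2).2
    · intro s _; exact hd s
  have hcompl : (Finset.univ.filter
      (fun s : Fin (maxFit T δ m x z) => ¬(i s < p ∧ j s < p))).card ≤ 2 * (m - p) := by
    have hsub : (Finset.univ.filter
        (fun s : Fin (maxFit T δ m x z) => ¬(i s < p ∧ j s < p))) ⊆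
        (Finset.univ.filter (fun s => p ≤ i s)) ∪
        (Finset.univ.filter (fun s => p ≤ j s)) := by
      intro s hs
      simp only [Finset.mem_filter, Finset.mem_univ, true_and, Finset.mem_union] at hs ⊢
      omega
    have h1 : (Finset.univ.filter
        (fun s : Fin (maxFit T δ m x z) => p ≤ i s)).card ≤ (Finset.Ico p m).card :=
      Finset.card_le_card_of_injOn i
        (fun s hs => by
          simp only [Finset.coe_filter, Finset.mem_univ, true_and, Set.mem_setOf_eq] at hs
          exact Finset.mem_Ico.2 ⟨hs, hin s⟩)
        (fun a _ b _ hab => hi.injective hab)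
    have h2 : (Finset.univ.filter
        (fun s : Fin (maxFit T δ m x z) => p ≤ j s)).card ≤ (Finset.Ico p m).card :=
      Finset.card_le_card_of_injOn j
        (fun s hs => by
          simp only [Finset.coe_filter, Finset.mem_univ, true_and, Set.mem_setOf_eq] at hs
          exact Finset.mem_Ico.2 ⟨hs, hjn s⟩)
        (fun a _ b _ hab => hj.injective hab)
    rw [Nat.card_Ico] at h1 h2
    calc (Finset.univ.filter
        (fun s : Fin (maxFit T δ m x z) => ¬(i s < p ∧ j s < p))).card
        ≤ _ := Finset.card_le_card hsub
      _ ≤ _ + _ := Finset.card_union_le _ _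
      _ ≤ 2 * (m - p) := by omega
  have hsplit := Finset.card_filter_add_card_filter_not
    (s := (Finset.univ : Finset (Fin (maxFit T δ m x z))))
    (p := fun s => i s < p ∧ j s < p)
  simp only [Finset.card_univ, Fintype.card_fin] at hsplit
  have := le_maxFit hmem
  omega

lemma maxFit_compose :
    maxFit T δ n x y + maxFit T δ' n y z ≤ n + maxFit T (δ + δ') n x z := by
  classical
  obtain ⟨i₁, j₁, hi₁, hj₁, hi₁n, hj₁n, hd₁⟩ :=
    maxFit_mem (T := T) (δ := δ) (n := n) (x := x) (z := y)
  obtain ⟨i₂, j₂, hi₂, hj₂, hi₂n, hj₂n, hd₂⟩ :=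
    maxFit_mem (T := T) (δ := δ') (n := n) (x := y) (z := z)
  have hAcard : (Finset.image j₁ Finset.univ).card = maxFit T δ n x y := by
    rw [Finset.card_image_of_injective _ hj₁.injective, Finset.card_univ, Fintype.card_fin]
  have hBcard : (Finset.image i₂ Finset.univ).card = maxFit T δ' n y z := by
    rw [Finset.card_image_of_injective _ hi₂.injective, Finset.card_univ, Fintype.card_fin]
  have hUn : (Finset.image j₁ Finset.univ ∪ Finset.image i₂ Finset.univ).card ≤ n := by
    have hsub : Finset.image j₁ Finset.univ ∪ Finset.image i₂ Finset.univ ⊆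
        Finset.range n := by
      intro a ha
      rcases Finset.mem_union.1 ha with h | h
      · obtain ⟨s, -, rfl⟩ := Finset.mem_image.1 h
        exact Finset.mem_range.2 (hj₁n s)
      · obtain ⟨s, -, rfl⟩ := Finset.mem_image.1 h
        exact Finset.mem_range.2 (hi₂n s)
    simpa using Finset.card_le_card hsub
  have hcards := Finset.card_union_add_card_inter
    (Finset.image j₁ Finset.univ) (Finset.image i₂ Finset.univ)
  have hkey : (Finset.image j₁ Finset.univ ∩ Finset.image i₂ Finset.univ).card ∈
      matchSet T (δ + δ') n x z := by
    set C := Finset.image j₁ Finset.univ ∩ Finset.image i₂ Finset.univ with hC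
    let e := C.orderIsoOfFin rfl
    have hmemA : ∀ s : Fin C.card, ((e s : ℕ) ∈ Finset.image j₁ Finset.univ) :=
      fun s => (Finset.mem_inter.1 (e s).2).1
    have hmemB : ∀ s : Fin C.card, ((e s : ℕ) ∈ Finset.image i₂ Finset.univ) :=
      fun s => (Finset.mem_inter.1 (e s).2).2
    choose σ hσu hσ using fun s => Finset.mem_image.1 (hmemA s)
    choose τ hτu hτ using fun s => Finset.mem_image.1 (hmemB s)
    refine ⟨fun s => i₁ (σ s), fun s => j₂ (τ s), ?_, ?_,
      fun s => hi₁n (σ s), fun s => hj₂n (τ s), fun s => ?_⟩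
    · intro a b hab
      show i₁ (σ a) < i₁ (σ b)
      apply hi₁
      have h1 : j₁ (σ a) < j₁ (σ b) := by
        rw [hσ a, hσ b]
        exact e.strictMono hab
      exact hj₁.lt_iff_lt.1 h1
    · intro a b hab
      show j₂ (τ a) < j₂ (τ b)
      apply hj₂
      have h1 : i₂ (τ a) < i₂ (τ b) := by
        rw [hτ a, hτ b]
        exact e.strictMono hab
      exact hi₂.lt_iff_lt.1 h1
    · show dist (T^[i₁ (σ s)] x) (T^[j₂ (τ s)] z) < δ + δ'
      have heq : j₁ (σ s) = i₂ (τ s) := by rw [hσ s, hτ s]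
      calc dist (T^[i₁ (σ s)] x) (T^[j₂ (τ s)] z)
          ≤ dist (T^[i₁ (σ s)] x) (T^[j₁ (σ s)] y) +
            dist (T^[j₁ (σ s)] y) (T^[j₂ (τ s)] z) := dist_triangle _ _ _
        _ < δ + δ' := by
            have h2 : dist (T^[j₁ (σ s)] y) (T^[j₂ (τ s)] z) < δ' := by
              rw [heq]; exact hd₂ (τ s)
            exact add_lt_add (hd₁ (σ s)) h2
  have := le_maxFit hkey
  omega

end FKAux

namespace FKAux

variable {X : Type*} [MetricSpace X] {T : X → X} {δ δ' ε : ℝ} {n m k : ℕ} {x y z : X}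

lemma fbarN_le_one : fbarN T δ n x z ≤ 1 := by
  have : (0:ℝ) ≤ (maxFit T δ n x z : ℝ) / n := by positivity
  unfold fbarN
  linarith

lemma fbarN_nonneg : 0 ≤ fbarN T δ n x z := by
  have h := maxFit_le (T := T) (δ := δ) (n := n) (x := x) (z := z)
  have hdiv : (maxFit T δ n x z : ℝ) / n ≤ 1 := by
    rcases Nat.eq_zero_or_pos n with hn | hn
    · subst hn; simp
    · rw [div_le_one (by exact_mod_cast hn)]
      exact_mod_cast h
  unfold fbarN
  linarith

lemma fbarN_bddAbove : IsBoundedUnder (· ≤ ·) atTop (fun n => fbarN T δ n x z) :=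
  ⟨1, Filter.eventually_map.2 (Filter.Eventually.of_forall fun _ => fbarN_le_one)⟩

lemma fbarN_bddBelow : IsBoundedUnder (· ≥ ·) atTop (fun n => fbarN T δ n x z) :=
  ⟨0, Filter.eventually_map.2 (Filter.Eventually.of_forall fun _ => fbarN_nonneg)⟩

lemma fbar_le_one : fbar T δ x z ≤ 1 :=
  Filter.limsup_le_of_le fbarN_bddBelow.isCoboundedUnder_le
    (Filter.Eventually.of_forall fun _ => fbarN_le_one)

lemma fbar_nonneg : 0 ≤ fbar T δ x z :=
  Filter.le_limsup_of_frequently_le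
    (Filter.Frequently.of_forall fun _ => fbarN_nonneg) fbarN_bddAbove

lemma fbarN_anti (h : δ ≤ δ') : fbarN T δ' n x z ≤ fbarN T δ n x z := by
  unfold fbarN
  have := maxFit_mono_delta (T := T) (n := n) (x := x) (z := z) h
  have hc : (maxFit T δ n x z : ℝ) ≤ (maxFit T δ' n x z : ℝ) := by exact_mod_cast this
  have h2 : (maxFit T δ n x z : ℝ) / n ≤ (maxFit T δ' n x z : ℝ) / n := by
    gcongr
  linarith

lemma fbar_anti (h : δ ≤ δ') : fbar T δ' x z ≤ fbar T δ x z :=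
  Filter.limsup_le_limsup (Filter.Eventually.of_forall fun n => fbarN_anti h)
    fbarN_bddBelow.isCoboundedUnder_le fbarN_bddAbove

lemma fbar_symm : fbar T δ x z = fbar T δ z x := by
  unfold fbar fbarN
  congr 1
  funext n
  rw [maxFit_symm]

end FKAux

namespace FKAux

variable {X : Type*} [MetricSpace X] {T : X → X} {δ δ' ε : ℝ} {n m k : ℕ} {x y z : X}

lemma fbarN_triangle : fbarN T (δ + δ') n x z ≤ fbarN T δ n x y + fbarN T δ' n y z := by
  rcases Nat.eq_zero_or_pos n with hn | hn
  · subst hn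
    simp [fbarN]
  · have h := maxFit_compose (T := T) (δ := δ) (δ' := δ') (n := n) (x := x) (y := y) (z := z)
    have hc : (maxFit T δ n x y : ℝ) + (maxFit T δ' n y z : ℝ) ≤
        (n : ℝ) + (maxFit T (δ + δ') n x z : ℝ) := by exact_mod_cast h
    have hn' : (0:ℝ) < n := by exact_mod_cast hn
    have hdiv : ((maxFit T δ n x y : ℝ) + (maxFit T δ' n y z : ℝ)) / n ≤
        ((n : ℝ) + (maxFit T (δ + δ') n x z : ℝ)) / n := by gcongr
    rw [add_div, add_div, div_self (ne_of_gt hn')] at hdiv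
    unfold fbarN
    linarith

lemma fbar_triangle : fbar T (δ + δ') x z ≤ fbar T δ x y + fbar T δ' y z := by
  have h1 : fbar T (δ + δ') x z ≤
      Filter.limsup ((fun n => fbarN T δ n x y) + (fun n => fbarN T δ' n y z)) atTop :=
    Filter.limsup_le_limsup (Filter.Eventually.of_forall fun n => fbarN_triangle)
      fbarN_bddBelow.isCoboundedUnder_le
      (by
        refine ⟨2, Filter.eventually_map.2 (Filter.Eventually.of_forall fun n => ?_)⟩
        have := fbarN_le_one (T := T) (δ := δ) (n := n) (x := x) (z := y)
        have := fbarN_le_one (T := T) (δ := δ') (n := n) (x := y) (z := z)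
        show fbarN T δ n x y + fbarN T δ' n y z ≤ 2
        linarith)
  refine h1.trans ?_
  exact limsup_add_le fbarN_bddBelow fbarN_bddAbove
    fbarN_bddBelow.isCoboundedUnder_le fbarN_bddAbove

lemma fbar_shift (n : ℕ) : fbar T δ x z ≤ fbar T δ (T^[n] x) (T^[n] z) := by
  have key : ∀ m, n ≤ m →
      fbarN T δ m x z ≤ fbarN T δ m (T^[n] x) (T^[n] z) + 2 * (n : ℝ) / m := by
    intro m hm
    rcases Nat.eq_zero_or_pos m with hm0 | hm0
    · subst hm0
      interval_cases n
      simp [fbarN]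
    · have h1 : maxFit T δ m (T^[n] x) (T^[n] z) ≤
          maxFit T δ (m - n) (T^[n] x) (T^[n] z) + 2 * n := by
        have := maxFit_le_restrict (T := T) (δ := δ) (m := m) (p := m - n)
          (x := T^[n] x) (z := T^[n] z) (Nat.sub_le m n)
        have hmn : m - (m - n) = n := by omega
        rwa [hmn] at this
      have h2 : maxFit T δ (m - n) (T^[n] x) (T^[n] z) ≤ maxFit T δ m x z := by
        have hmem := maxFit_mem (T := T) (δ := δ) (n := m - n) (x := T^[n] x) (z := T^[n] z)
        have := shift_mem (n := n) hmem
        have heq : m - n + n = m := by omega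
        rw [heq] at this
        exact le_maxFit this
      have hG : (maxFit T δ m (T^[n] x) (T^[n] z) : ℝ) ≤ (maxFit T δ m x z : ℝ) + 2 * n := by
        have : maxFit T δ m (T^[n] x) (T^[n] z) ≤ maxFit T δ m x z + 2 * n := by omega
        exact_mod_cast this
      have hm' : (0:ℝ) < m := by exact_mod_cast hm0
      have hdiv : (maxFit T δ m (T^[n] x) (T^[n] z) : ℝ) / m ≤
          ((maxFit T δ m x z : ℝ) + 2 * n) / m := by gcongr
      rw [add_div] at hdiv
      unfold fbarN
      have : 2 * (n:ℝ) / m = 2 * n / m := rfl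
      linarith
  have ev : ∀ᶠ m in atTop, fbarN T δ m x z ≤
      fbarN T δ m (T^[n] x) (T^[n] z) + 2 * (n : ℝ) / m :=
    Filter.eventually_atTop.2 ⟨n, key⟩
  have hc : Filter.Tendsto (fun m : ℕ => 2 * (n : ℝ) / m) atTop (nhds 0) := by
    exact tendsto_const_div_atTop_nhds_zero_nat (2 * (n : ℝ))
  have hb1 : IsBoundedUnder (· ≥ ·) atTop (fun m : ℕ => 2 * (n : ℝ) / m) :=
    ⟨0, Filter.eventually_map.2 (Filter.Eventually.of_forall fun m => by positivity)⟩
  have hb2 : IsBoundedUnder (· ≤ ·) atTop (fun m : ℕ => 2 * (n : ℝ) / m) :=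
    hc.isBoundedUnder_le
  have h1 : fbar T δ x z ≤ Filter.limsup
      ((fun m => fbarN T δ m (T^[n] x) (T^[n] z)) + (fun m : ℕ => 2 * (n : ℝ) / m)) atTop := by
    refine Filter.limsup_le_limsup ev fbarN_bddBelow.isCoboundedUnder_le ?_
    obtain ⟨b, hb⟩ := hb2
    refine ⟨1 + b, ?_⟩
    rw [Filter.eventually_map] at hb ⊢
    filter_upwards [hb] with m hm
    have := fbarN_le_one (T := T) (δ := δ) (n := m) (x := T^[n] x) (z := T^[n] z)
    show fbarN T δ m (T^[n] x) (T^[n] z) + 2 * (n : ℝ) / m ≤ 1 + b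
    linarith
  refine h1.trans ?_
  have h2 := limsup_add_le (f := (atTop : Filter ℕ))
    (u := fun m => fbarN T δ m (T^[n] x) (T^[n] z)) (v := fun m : ℕ => 2 * (n : ℝ) / m)
    fbarN_bddBelow fbarN_bddAbove hb1.isCoboundedUnder_le hb2
  rw [hc.limsup_eq, add_zero] at h2
  exact h2

end FKAux

namespace FKAux

variable {X : Type*} [MetricSpace X] {T : X → X} {δ δ' ε : ℝ} {n m k : ℕ} {x y z : X}

lemma rho_def : rhoFK T x z = sInf {δ : ℝ | 0 < δ ∧ fbar T δ x z < δ} := rfl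

lemma two_mem_rhoSet : (2:ℝ) ∈ {δ : ℝ | 0 < δ ∧ fbar T δ x z < δ} :=
  ⟨two_pos, lt_of_le_of_lt fbar_le_one one_lt_two⟩

lemma rhoSet_bddBelow : BddBelow {δ : ℝ | 0 < δ ∧ fbar T δ x z < δ} :=
  ⟨0, fun _ h => h.1.le⟩

lemma rho_nonneg : 0 ≤ rhoFK T x z :=
  le_csInf ⟨2, two_mem_rhoSet⟩ fun _ h => h.1.le

lemma rho_le_of_mem (h1 : 0 < δ) (h2 : fbar T δ x z < δ) : rhoFK T x z ≤ δ :=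
  csInf_le rhoSet_bddBelow ⟨h1, h2⟩

lemma exists_lt_of_rho_lt (h : rhoFK T x z < ε) :
    ∃ δ, (0 < δ ∧ fbar T δ x z < δ) ∧ δ < ε :=
  exists_lt_of_csInf_lt ⟨2, two_mem_rhoSet⟩ h

lemma mem_of_rho_lt (h : rhoFK T x z < ε) : 0 < ε ∧ fbar T ε x z < ε := by
  obtain ⟨δ, ⟨hδ, hf⟩, hδε⟩ := exists_lt_of_rho_lt h
  exact ⟨hδ.trans hδε, lt_of_le_of_lt (fbar_anti hδε.le) (hf.trans hδε)⟩

lemma rho_symm : rhoFK T x z = rhoFK T z x := by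
  unfold rhoFK
  congr 1
  ext δ
  simp only [Set.mem_setOf_eq]
  rw [fbar_symm (T := T) (δ := δ) (x := x) (z := z)]

lemma rho_triangle : rhoFK T x z ≤ rhoFK T x y + rhoFK T y z := by
  refine le_of_forall_pos_le_add fun η hη => ?_
  obtain ⟨δ₁, ⟨hδ₁, hf₁⟩, hlt₁⟩ := exists_lt_of_rho_lt
    (show rhoFK T x y < rhoFK T x y + η / 2 by linarith)
  obtain ⟨δ₂, ⟨hδ₂, hf₂⟩, hlt₂⟩ := exists_lt_of_rho_lt
    (show rhoFK T y z < rhoFK T y z + η / 2 by linarith)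
  have h3 : fbar T (δ₁ + δ₂) x z < δ₁ + δ₂ :=
    lt_of_le_of_lt fbar_triangle (add_lt_add hf₁ hf₂)
  have := rho_le_of_mem (by linarith) h3
  linarith

lemma rho_shift (n : ℕ) : rhoFK T x z ≤ rhoFK T (T^[n] x) (T^[n] z) := by
  refine le_of_forall_pos_le_add fun η hη => ?_
  obtain ⟨δ, ⟨hδ, hf⟩, hlt⟩ := exists_lt_of_rho_lt
    (show rhoFK T (T^[n] x) (T^[n] z) < rhoFK T (T^[n] x) (T^[n] z) + η by linarith)
  have hε : 0 < rhoFK T (T^[n] x) (T^[n] z) + η := by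
    have := rho_nonneg (T := T) (x := T^[n] x) (z := T^[n] z)
    linarith
  refine rho_le_of_mem hε ?_
  calc fbar T (rhoFK T (T^[n] x) (T^[n] z) + η) x z
      ≤ fbar T (rhoFK T (T^[n] x) (T^[n] z) + η) (T^[n] x) (T^[n] z) := fbar_shift n
    _ ≤ fbar T δ (T^[n] x) (T^[n] z) := fbar_anti hlt.le
    _ < δ := hf
    _ < _ := hlt

end FKAux

namespace FKAux

variable {X : Type*} [MetricSpace X] {T : X → X} {δ δ' ε : ℝ} {n m k : ℕ} {x y z : X}

lemma sens_no_cont (h : FKSensitive T) (hx : FKContinuityPoint T x) : False := by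
  obtain ⟨ε, hε, hsen⟩ := h
  obtain ⟨δ, hδ, hcont⟩ := hx (ε / 3) (by linarith)
  obtain ⟨a, ha, b, hb, hab⟩ := hsen (Metric.ball x δ) Metric.isOpen_ball
    ⟨x, Metric.mem_ball_self hδ⟩
  have h1 : rhoFK T x a ≤ ε / 3 :=
    hcont a (by rw [dist_comm]; exact (Metric.mem_ball.1 ha).le)
  have h2 : rhoFK T x b ≤ ε / 3 :=
    hcont b (by rw [dist_comm]; exact (Metric.mem_ball.1 hb).le)
  have h3 : rhoFK T a b ≤ rhoFK T a x + rhoFK T x b := rho_triangle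
  rw [rho_symm (T := T) (x := a) (z := x)] at h3
  linarith

lemma not_sens (h : ¬ FKSensitive T) :
    ∀ ε : ℝ, 0 < ε → ∃ U : Set X, IsOpen U ∧ U.Nonempty ∧
      ∀ a ∈ U, ∀ b ∈ U, rhoFK T a b ≤ ε := by
  unfold FKSensitive at h
  push_neg at h
  exact fun ε hε => h ε hε

lemma ball_control (hT : Continuous T) (n : ℕ) {U : Set X} (hU : IsOpen U)
    (hx : T^[n] x ∈ U) : ∃ δ > 0, ∀ y, dist x y ≤ δ → T^[n] y ∈ U := by
  have hop : IsOpen ((T^[n]) ⁻¹' U) := (hT.iterate n).isOpen_preimage U hU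
  obtain ⟨r, hr, hball⟩ := Metric.isOpen_iff.1 hop x hx
  exact ⟨r / 2, by linarith, fun y hy =>
    hball (by rw [Metric.mem_ball, dist_comm]; linarith)⟩

end FKAux

open FKAux


/-- Auslander–Yorke dichotomy for `ρ_FK`: a transitive TDS is almost
FK-continuous iff it is not FK-sensitive; a minimal TDS is FK-continuous iff it is
not FK-sensitive. -/
theorem auslander_yorke_FK {X : Type*} [MetricSpace X] [CompactSpace X] [Nonempty X]
    (T : X → X) (hT : Continuous T) :
    (IsTransitive T → ((EqFK T ∈ residual X) ↔ ¬ FKSensitive T)) ∧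
    (IsMinimal T → ((∀ x : X, FKContinuityPoint T x) ↔ ¬ FKSensitive T)) := by
  constructor
  · intro hTrans
    constructor
    · intro hres hsens
      obtain ⟨x, hx⟩ := (dense_of_mem_residual hres).nonempty
      exact sens_no_cont hsens hx
    · intro hnot
      have hns := not_sens hnot
      set G : ℕ → Set X := fun k =>
        ⋃₀ {U | IsOpen U ∧ ∀ a ∈ U, ∀ b ∈ U, rhoFK T a b ≤ 1 / (k + 1)} with hG
      have hGopen : ∀ k, IsOpen (G k) := fun k => isOpen_sUnion fun U hU => hU.1
      have hGdense : ∀ k, Dense (G k) := by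
        intro k
        rw [dense_iff_inter_open]
        intro V hV hVne
        obtain ⟨U₀, hU₀o, hU₀ne, hU₀⟩ := hns (1 / (k + 1)) (by positivity)
        obtain ⟨n, hn, w, hw1, hw2⟩ := hTrans U₀ V hU₀o hV hU₀ne hVne
        refine ⟨w, hw2, V ∩ (T^[n]) ⁻¹' U₀,
          ⟨hV.inter ((hT.iterate n).isOpen_preimage _ hU₀o),
            fun a ha b hb => (rho_shift n).trans (hU₀ _ ha.2 _ hb.2)⟩, hw2, hw1⟩
      have hsub : (⋂ k, G k) ⊆ EqFK T := by
        intro x hx ε hε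
        obtain ⟨k, hk⟩ := exists_nat_one_div_lt hε
        obtain ⟨U, ⟨hUo, hUρ⟩, hxU⟩ := Set.mem_iInter.1 hx k
        obtain ⟨r, hr, hball⟩ := Metric.isOpen_iff.1 hUo x hxU
        refine ⟨r / 2, by linarith, fun y hy => ?_⟩
        have hyU : y ∈ U := hball (by rw [Metric.mem_ball, dist_comm]; linarith)
        have := hUρ x hxU y hyU
        calc rhoFK T x y ≤ 1 / (k + 1) := by exact_mod_cast this
          _ ≤ ε := by exact_mod_cast hk.le
      exact Filter.mem_of_superset
        ((countable_iInter_mem).2 fun k =>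
          mem_residual.2 ⟨G k, subset_rfl, (hGopen k).isGδ, hGdense k⟩) hsub
  · intro hMin
    constructor
    · intro hall hsens
      exact sens_no_cont hsens (hall (Classical.arbitrary X))
    · intro hnot x ε hε
      obtain ⟨U₀, hU₀o, hU₀ne, hU₀⟩ := not_sens hnot ε hε
      obtain ⟨yy, ⟨n, hny⟩, hyU⟩ := (hMin x).exists_mem_open hU₀o hU₀ne
      obtain ⟨δ, hδ, hctl⟩ := ball_control hT n hU₀o (by rw [hny]; exact hyU)
      refine ⟨δ, hδ, fun y' hy' => ?_⟩
      exact (rho_shift n).trans (hU₀ _ (hctl x (by rw [dist_self]; exact hδ.le)) _ (hctl y' hy'))
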